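/- Let V be a real vector space, γ a positive semidefinite symmetric bilinear form and ω a skew-symmetric bilinear form on V. If h := γ + iω is a positive definite kernel on V, then ω(v,w)² ≤ γ(v,v)·γ(w,w) for all v, w ∈ V. -/

import Mathlib

open scoped ComplexOrder

/-- If `γ` is positive semidefinite symmetric, `ω` skew-symmetric,
and `h = γ + iω` is a positive definite kernel on `V`, then
`ω(v,w)² ≤ γ(v,v)γ(w,w)` for all `v, w`. -/
theorem stmt7 {V : Type*} [AddCommGroup V] [Module ℝ V]
    (γ ω : V →ₗ[ℝ] V →ₗ[ℝ] ℝ)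
    (hγsymm : ∀ v w, γ v w = γ w v)
    (hωskew : ∀ v w, ω v w = -ω w v)
    (hγpos : ∀ v, 0 ≤ γ v v)
    (hpd : ∀ (n : ℕ) (x : Fin n → V) (c : Fin n → ℂ),
      0 ≤ ∑ j, ∑ k, (starRingEnd ℂ) (c j) * c k *
        ((γ (x j) (x k) : ℂ) + (ω (x j) (x k) : ℂ) * Complex.I)) :
    ∀ v w : V, (ω v w) ^ 2 ≤ γ v v * γ w w := by
  intro v w
  set a := γ v v with ha
  set d := γ w w with hd
  set g := γ v w with hg
  set o := ω v w with ho
  have hωvv : ω v v = 0 := by have := hωskew v v; linarith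
  have hωww : ω w w = 0 := by have := hωskew w w; linarith
  have hωwv : ω w v = -o := by have := hωskew v w; linarith
  have hγwv : γ w v = g := (hγsymm v w).symm
  set B : ℝ := g ^ 2 + o ^ 2 with hB
  -- the quadratic in t is nonnegative
  have hquad : ∀ t : ℝ, 0 ≤ a * t ^ 2 + (-2 * B) * t + B * d := by
    intro t
    have h2 := hpd 2 ![v, w] ![(t : ℂ), -((g : ℂ) - (o : ℂ) * Complex.I)]
    have heq : (∑ j : Fin 2, ∑ k : Fin 2, (starRingEnd ℂ) ((![(t : ℂ), -((g : ℂ) - (o : ℂ) * Complex.I)]) j) * (![(t : ℂ), -((g : ℂ) - (o : ℂ) * Complex.I)]) k *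
        ((γ ((![v, w]) j) ((![v, w]) k) : ℂ) + (ω ((![v, w]) j) ((![v, w]) k) : ℂ) * Complex.I))
        = ((a * t ^ 2 + (-2 * B) * t + B * d : ℝ) : ℂ) := by
      simp only [Fin.sum_univ_two, Matrix.cons_val_zero, Matrix.cons_val_one, Matrix.head_cons,
        hωvv, hωww, hωwv, hγwv, map_neg, map_sub, map_mul, Complex.conj_I,
        Complex.conj_ofReal]
      push_cast
      ring_nf
      simp [Complex.I_sq]
      rw [← ho, ← hg, ← ha, ← hd, hB]
      push_cast
      ring
    rw [heq] at h2
    exact_mod_cast h2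
  have hdisc := discrim_le_zero (a := a) (b := -2 * B) (c := B * d)
    (fun t => by have := hquad t; nlinarith)
  rw [discrim] at hdisc
  have hBnn : 0 ≤ B := by positivity
  have hoB : o ^ 2 ≤ B := by nlinarith [sq_nonneg g]
  nlinarith [mul_nonneg (hγpos v) (hγpos w), sq_nonneg o, sq_nonneg B]
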